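/- Let K > 0 and let a : ℕ → ℝ be a sequence with a(n) ≥ 0 for all n, satisfying a(n) ≤ (K/(2n)) · Σ_{i=0}^{n−1} [ i!·(n−1−i)!/(n−1)! ] · a(n−1−i) for all n ≥ 1. Then the sequence (a(n)) is bounded: there exists C > 0 with a(n) ≤ C for all n. -/
import Mathlib


noncomputable section

lemma my_choose_ge {m j : ℕ} (h1 : 1 ≤ j) (h2 : j ≤ m - 1) : m ≤ m.choose j := by
  obtain ⟨k, rfl⟩ := Nat.exists_eq_add_of_le h1
  have hm : k + 1 + 1 ≤ m := by omega
  obtain ⟨n, rfl⟩ : ∃ n, m = n + 1 := ⟨m - 1, by omega⟩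
  have hid := Nat.add_one_mul_choose_eq n k
  have hkn : k + 1 ≤ n := by omega
  have hcs : k + 1 ≤ n.choose k := by
    calc k + 1 = (k + 1).choose k := (Nat.choose_succ_self_right k).symm
    _ ≤ n.choose k := Nat.choose_le_choose k hkn
  have : (n + 1) * (k + 1) ≤ (n + 1).choose (k + 1) * (k + 1) := by
    calc (n + 1) * (k + 1) ≤ (n + 1) * n.choose k := Nat.mul_le_mul_left _ hcs
    _ = (n + 1).choose (k + 1) * (k + 1) := hid
  have hrw : 1 + k = k + 1 := by omega
  rw [hrw]
  exact Nat.le_of_mul_le_mul_right this (by omega)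

lemma sum_coeff_le (m : ℕ) :
    ∑ i ∈ Finset.range (m + 1),
      ((i.factorial : ℝ) * ((m - i).factorial : ℝ)) / (m.factorial : ℝ) ≤ 3 := by
  set f : ℕ → ℝ := fun i => ((i.factorial : ℝ) * ((m - i).factorial : ℝ)) / (m.factorial : ℝ)
    with hf
  have hf0 : f 0 = 1 := by
    simp [hf, div_self (by positivity : ((m.factorial : ℝ)) ≠ 0)]
  have hfm : f m = 1 := by
    simp [hf, div_self (by positivity : ((m.factorial : ℝ)) ≠ 0)]
  rcases Nat.eq_zero_or_pos m with rfl | hm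
  · rw [show (0+1) = 1 from rfl, Finset.sum_range_one]; rw [show (↑(Nat.factorial 0) * ((0 - 0 : ℕ).factorial : ℝ) / ↑(Nat.factorial 0) : ℝ) = f 0 from rfl, hf0]; norm_num
  obtain ⟨p, rfl⟩ : ∃ p, m = p + 1 := ⟨m - 1, by omega⟩
  rw [Finset.sum_range_succ, Finset.sum_range_succ']
  show (∑ k ∈ Finset.range p, f (k + 1)) + f 0 + f (p + 1) ≤ 3
  rw [hf0, hfm]
  have hmid : ∑ i ∈ Finset.range p, f (i + 1) ≤ 1 := by
    have hterm : ∀ i ∈ Finset.range p, f (i + 1) ≤ 1 / ((p : ℝ) + 1) := by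
      intro i hi
      simp only [Finset.mem_range] at hi
      have hch : (p + 1 : ℕ) ≤ (p + 1).choose (i + 1) := my_choose_ge (by omega) (by omega)
      have hkey := Nat.choose_mul_factorial_mul_factorial (n := p + 1) (k := i + 1) (by omega)
      rw [hf]
      simp only
      rw [div_le_div_iff₀ (by positivity) (by positivity)]
      have hcast := congrArg (fun x : ℕ => (x : ℝ)) hkey
      have hchR : ((p : ℝ) + 1) ≤ (((p + 1).choose (i + 1) : ℕ) : ℝ) := by exact_mod_cast hch
      push_cast at hcast ⊢
      have hmul := mul_le_mul_of_nonneg_right hchR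
        (show (0:ℝ) ≤ ((i + 1).factorial : ℝ) * ((p - i).factorial : ℝ) by positivity)
      nlinarith [hmul, hcast]
    calc ∑ i ∈ Finset.range p, f (i + 1)
        ≤ ∑ _i ∈ Finset.range p, 1 / ((p : ℝ) + 1) := Finset.sum_le_sum hterm
      _ = p * (1 / ((p : ℝ) + 1)) := by
          rw [Finset.sum_const, Finset.card_range]; push_cast; ring
      _ ≤ 1 := by rw [mul_one_div, div_le_one (by positivity)]; linarith
  linarith

/-- If `a : ℕ → ℝ` is nonnegative and satisfies
`a(n) ≤ (K/(2n))·Σ_{i=0}^{n-1} [i!(n-1-i)!/(n-1)!]·a(n-1-i)` for all `n ≥ 1`,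
then `(a(n))` is bounded. -/
theorem recursive_inequality_bounded
    (K : ℝ) (hK : 0 < K)
    (a : ℕ → ℝ) (ha : ∀ n, 0 ≤ a n)
    (hrec : ∀ n : ℕ, 1 ≤ n →
      a n ≤ K / (2 * (n : ℝ)) * ∑ i ∈ Finset.range n,
        ((i.factorial : ℝ) * ((n - 1 - i).factorial : ℝ)) / ((n - 1).factorial : ℝ)
          * a (n - 1 - i)) :
    ∃ C : ℝ, 0 < C ∧ ∀ n, a n ≤ C := by
  set N : ℕ := ⌈3 * K / 2⌉₊ with hNdef
  set C : ℝ := (∑ m ∈ Finset.range (N + 1), a m) + 1 with hCdef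
  have hsum0 : 0 ≤ ∑ m ∈ Finset.range (N + 1), a m := Finset.sum_nonneg fun i _ => ha i
  have hC1 : (1 : ℝ) ≤ C := by rw [hCdef]; linarith
  have hCpos : 0 < C := lt_of_lt_of_le one_pos hC1
  have hbase : ∀ m, m ≤ N → a m ≤ C := by
    intro m hm
    have h := Finset.single_le_sum (f := a) (fun i _ => ha i)
      (Finset.mem_range.mpr (show m < N + 1 by omega))
    rw [hCdef]; linarith
  refine ⟨C, hCpos, ?_⟩
  intro n
  induction n using Nat.strong_induction_on with
  | _ n ih =>
    by_cases hn : n ≤ N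
    · exact hbase n hn
    push_neg at hn
    obtain ⟨p, rfl⟩ : ∃ p, n = p + 1 := ⟨n - 1, by omega⟩
    have key := hrec (p + 1) (by omega)
    have hps : p + 1 - 1 = p := by omega
    rw [hps] at key
    have hsum : ∑ i ∈ Finset.range (p + 1),
        ((i.factorial : ℝ) * ((p - i).factorial : ℝ)) / ((p).factorial : ℝ) * a (p - i)
          ≤ 3 * C := by
      have h1 : ∀ i ∈ Finset.range (p + 1),
          ((i.factorial : ℝ) * ((p - i).factorial : ℝ)) / ((p).factorial : ℝ) * a (p - i)
          ≤ ((i.factorial : ℝ) * ((p - i).factorial : ℝ)) / ((p).factorial : ℝ) * C := by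
        intro i _
        exact mul_le_mul_of_nonneg_left (ih _ (by omega)) (by positivity)
      calc ∑ i ∈ Finset.range (p + 1),
          ((i.factorial : ℝ) * ((p - i).factorial : ℝ)) / ((p).factorial : ℝ) * a (p - i)
          ≤ ∑ i ∈ Finset.range (p + 1),
            ((i.factorial : ℝ) * ((p - i).factorial : ℝ)) / ((p).factorial : ℝ) * C :=
            Finset.sum_le_sum h1
        _ = (∑ i ∈ Finset.range (p + 1),
            ((i.factorial : ℝ) * ((p - i).factorial : ℝ)) / ((p).factorial : ℝ)) * C :=
            (Finset.sum_mul _ _ _).symm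
        _ ≤ 3 * C := mul_le_mul_of_nonneg_right (sum_coeff_le p) hCpos.le
    have hKdiv : (0 : ℝ) ≤ K / (2 * ((p + 1 : ℕ) : ℝ)) := by positivity
    have hstep : a (p + 1) ≤ K / (2 * ((p + 1 : ℕ) : ℝ)) * (3 * C) :=
      key.trans (mul_le_mul_of_nonneg_left hsum hKdiv)
    have hNle : (N : ℝ) ≤ (p : ℝ) := by exact_mod_cast (by omega : N ≤ p)
    have hceil : 3 * K / 2 ≤ (N : ℝ) := Nat.le_ceil _
    have h3K : 3 * K ≤ 2 * ((p : ℝ) + 1) := by linarith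
    have hfin : K / (2 * ((p + 1 : ℕ) : ℝ)) * (3 * C) ≤ C := by
      have heq : K / (2 * ((p + 1 : ℕ) : ℝ)) * (3 * C)
          = (3 * K / (2 * ((p : ℝ) + 1))) * C := by push_cast; ring
      rw [heq]
      have hd : 3 * K / (2 * ((p : ℝ) + 1)) ≤ 1 := by
        rw [div_le_one (by positivity)]; linarith
      nlinarith
    exact hstep.trans hfin
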